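/- Let S be a set of pairwise commuting Hilbert space effects with I ∈ S. For finite U, V ⊆ S, define ⟨U|V⟩ = (∏U)·(⨆V), where ∏U is the product of the elements of U (∏∅ = I) and ⨆V is the iterated operation v₁ ⊔ ⋯ ⊔ vₙ with a ⊔ b = a + b − ab (⨆∅ = 0). Then ⟨·|·⟩ is a compatibility support mapping for S. -/

import Mathlib

open scoped Classical

variable {H : Type*} [NormedAddCommGroup H] [InnerProductSpace ℂ H] [CompleteSpace H]

/-- `a ⊔ b := a + b - ab`. -/
noncomputable def opSq (a b : H →L[ℂ] H) : H →L[ℂ] H := a + b - a * b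

/-- `⟨U|V⟩ = (∏ U) · (⨆ V)`, with `∏∅ = 1` and `⨆∅ = 0`. -/
noncomputable def opCSM (U V : Finset (H →L[ℂ] H)) : H →L[ℂ] H :=
  U.toList.prod * (V.toList.foldr opSq 0)

set_option maxHeartbeats 1000000

private lemma cfc_complex_mem_elemental {A : Type*} [CStarAlgebra A] (f : ℂ → ℂ) (a : A)
    [ha : IsStarNormal a] : cfc f a ∈ StarAlgebra.elemental ℂ a := by
  by_cases hf : ContinuousOn f (spectrum ℂ a)
  · rw [cfc_apply f a, cfcHom_eq_of_isStarNormal]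
    simp only [StarAlgHom.comp_apply, StarSubalgebra.coe_subtype]
    exact SetLike.coe_mem _
  · rw [cfc_apply_of_not_continuousOn a hf]
    exact zero_mem _

private lemma sqrt_commute {a b : H →L[ℂ] H} (ha : 0 ≤ a) (hb : IsSelfAdjoint b)
    (h : Commute a b) : Commute (CFC.sqrt a) b := by
  have hsa : IsSelfAdjoint a := .of_nonneg ha
  have hsn : IsStarNormal a := hsa.isStarNormal
  have hmem : CFC.sqrt a ∈ StarAlgebra.elemental ℂ a := by
    rw [CFC.sqrt_eq_cfc, cfc_nnreal_eq_real _ _ ha, cfc_real_eq_complex _ hsa]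
    exact cfc_complex_mem_elemental _ a
  have hcl : IsClosed ((StarSubalgebra.centralizer ℂ {b}) : Set (H →L[ℂ] H)) := by
    rw [StarSubalgebra.coe_centralizer]
    have : (({b} ∪ star {b}) : Set (H →L[ℂ] H)).centralizer =
        ⋂ m ∈ (({b} ∪ star {b}) : Set (H →L[ℂ] H)), {x | m * x = x * m} := by
      ext x; simp [Set.mem_centralizer_iff]
    rw [this]
    exact isClosed_biInter fun m _ => isClosed_eq (continuous_mul_left m) (continuous_mul_right m)
  have hamem : a ∈ StarSubalgebra.centralizer ℂ {b} := by
    rw [StarSubalgebra.mem_centralizer_iff]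
    rintro g hg
    rw [Set.mem_singleton_iff] at hg
    subst hg
    exact ⟨h.symm.eq, by rw [hb.star_eq]; exact h.symm.eq⟩
  have hfin := StarAlgebra.elemental.le_of_mem hcl hamem hmem
  rw [StarSubalgebra.mem_centralizer_iff] at hfin
  exact ((hfin b rfl).1).symm

private lemma mul_nonneg_of_commute {a b : H →L[ℂ] H} (ha : 0 ≤ a) (hb : 0 ≤ b)
    (h : Commute a b) : 0 ≤ a * b := by
  have hsq := sqrt_commute ha (IsSelfAdjoint.of_nonneg hb) h
  have key : a * b = star (CFC.sqrt a) * b * CFC.sqrt a := by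
    have h1 : CFC.sqrt a * CFC.sqrt a = a := CFC.sqrt_mul_sqrt_self a ha
    have h2 : star (CFC.sqrt a) = CFC.sqrt a :=
      (IsSelfAdjoint.of_nonneg (CFC.sqrt_nonneg a)).star_eq
    rw [h2, mul_assoc, ← hsq.eq, ← mul_assoc, h1]
  rw [key]
  exact star_left_conjugate_nonneg hb _

private lemma list_prod_nonneg : ∀ (l : List (H →L[ℂ] H)), (∀ x ∈ l, 0 ≤ x) →
    (∀ x ∈ l, ∀ y ∈ l, Commute x y) → 0 ≤ l.prod
  | [], _, _ => by simp
  | a :: l, h, hc => by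
    rw [List.prod_cons]
    exact mul_nonneg_of_commute (h a (.head l))
      (list_prod_nonneg l (fun x hx => h x (.tail _ hx))
        (fun x hx y hy => hc x (.tail _ hx) y (.tail _ hy)))
      (Commute.list_prod_right _ _ fun x hx => hc a (.head l) x (.tail _ hx))

private lemma list_prod_le_one : ∀ (l : List (H →L[ℂ] H)), (∀ x ∈ l, 0 ≤ x ∧ x ≤ 1) →
    (∀ x ∈ l, ∀ y ∈ l, Commute x y) → l.prod ≤ 1
  | [], _, _ => by simp
  | a :: l, h, hc => by
    rw [List.prod_cons]
    have hp0 : 0 ≤ l.prod := list_prod_nonneg l (fun x hx => (h x (.tail _ hx)).1)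
      (fun x hx y hy => hc x (.tail _ hx) y (.tail _ hy))
    have hp1 : l.prod ≤ 1 := list_prod_le_one l (fun x hx => h x (.tail _ hx))
      (fun x hx y hy => hc x (.tail _ hx) y (.tail _ hy))
    have ha := h a (.head l)
    have hcom : Commute a l.prod :=
      Commute.list_prod_right _ _ fun x hx => hc a (.head l) x (.tail _ hx)
    have h2 : a * l.prod ≤ a := by
      have h3 : 0 ≤ a * (1 - l.prod) :=
        mul_nonneg_of_commute ha.1 (sub_nonneg.2 hp1) ((Commute.one_right a).sub_right hcom)
      rw [mul_sub, mul_one] at h3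
      exact sub_nonneg.1 h3
    exact h2.trans ha.2

private lemma foldr_opSq_eq (l : List (H →L[ℂ] H)) :
    l.foldr opSq 0 = 1 - (l.map (fun x => 1 - x)).prod := by
  induction l with
  | nil => simp
  | cons a l ih =>
    rw [List.foldr_cons, ih, List.map_cons, List.prod_cons, opSq]
    noncomm_ring

private lemma toList_perm_of_subset {α : Type*} [DecidableEq α] {V₁ V₂ : Finset α}
    (h : V₁ ⊆ V₂) : V₂.toList.Perm (V₁.toList ++ (V₂ \ V₁).toList) := by
  rw [← Multiset.coe_eq_coe, Finset.coe_toList, ← Multiset.coe_add, Finset.coe_toList,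
    Finset.coe_toList, Finset.sdiff_val]
  exact (add_tsub_cancel_of_le (Finset.val_le_iff.mpr h)).symm

/-- For a set `S` of pairwise commuting Hilbert space effects with `1 ∈ S`,
`⟨U|V⟩ = (∏U)·(⨆V)` is a compatibility support mapping for `S` (in the effect
algebra of Hilbert space effects, where `x ≤ y` iff `y - x` is positive and
`⊖` is operator subtraction). -/
theorem opCSM_isCSM (S : Set (H →L[ℂ] H))
    (hS : ∀ a ∈ S, a.IsPositive ∧ ((1 : H →L[ℂ] H) - a).IsPositive)
    (hcomm : ∀ a ∈ S, ∀ b ∈ S, a * b = b * a)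
    (h1 : (1 : H →L[ℂ] H) ∈ S) :
    (∀ U V₁ V₂ : Finset (H →L[ℂ] H), ↑U ⊆ S → ↑V₁ ⊆ S → ↑V₂ ⊆ S → V₁ ⊆ V₂ →
      (opCSM U V₂ - opCSM U V₁).IsPositive) ∧
    (∀ U V : Finset (H →L[ℂ] H), ↑U ⊆ S → ↑V ⊆ S →
      (opCSM U {1} - opCSM U V).IsPositive) ∧
    (∀ U : Finset (H →L[ℂ] H), ↑U ⊆ S → opCSM U ∅ = 0) ∧
    (∀ c ∈ S, opCSM ∅ {c} = c) ∧
    (∀ (U V : Finset (H →L[ℂ] H)) (c : H →L[ℂ] H), ↑U ⊆ S → ↑V ⊆ S → c ∈ S →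
      c ∉ U → c ∉ V →
      opCSM (insert c U) {1} - opCSM (insert c U) V =
        opCSM U (insert c V) - opCSM U V) := by
  classical
  have effS : ∀ a ∈ S, 0 ≤ a ∧ a ≤ 1 := by
    intro a haS
    obtain ⟨p1, p2⟩ := hS a haS
    exact ⟨(ContinuousLinearMap.nonneg_iff_isPositive a).2 p1,
      (ContinuousLinearMap.le_def a 1).2 p2⟩
  have hmemP : ∀ (U : Finset (H →L[ℂ] H)), ↑U ⊆ S → ∀ x ∈ U.toList, x ∈ S := by
    intro U hU x hx
    exact hU (Finset.mem_coe.2 (Finset.mem_toList.1 hx))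
  have hmemQ : ∀ (V : Finset (H →L[ℂ] H)), ↑V ⊆ S →
      ∀ x ∈ V.toList.map (fun v => 1 - v), ∃ v ∈ S, x = 1 - v := by
    intro V hV x hx
    obtain ⟨v, hv, rfl⟩ := List.mem_map.1 hx
    exact ⟨v, hV (Finset.mem_coe.2 (Finset.mem_toList.1 hv)), rfl⟩
  have hcom1 : ∀ x ∈ S, ∀ v ∈ S, Commute x (1 - v) := fun x hx v hv =>
    (Commute.one_right x).sub_right (hcomm x hx v hv)
  have hcom2 : ∀ v ∈ S, ∀ w ∈ S, Commute (1 - v) (1 - w) := fun v hv w hw =>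
    Commute.sub_right (Commute.one_right (1 - v))
      (Commute.sub_left (Commute.one_left w) (hcomm v hv w hw))
  have hP0 : ∀ (U : Finset (H →L[ℂ] H)), ↑U ⊆ S → 0 ≤ U.toList.prod := fun U hU =>
    list_prod_nonneg _ (fun x hx => (effS x (hmemP U hU x hx)).1)
      (fun x hx y hy => hcomm x (hmemP U hU x hx) y (hmemP U hU y hy))
  have hQelt : ∀ (V : Finset (H →L[ℂ] H)), ↑V ⊆ S →
      ∀ x ∈ V.toList.map (fun v => 1 - v), 0 ≤ x ∧ x ≤ 1 := by
    intro V hV x hx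
    obtain ⟨v, hv, rfl⟩ := hmemQ V hV x hx
    exact ⟨sub_nonneg.2 (effS v hv).2, sub_le_self 1 (effS v hv).1⟩
  have hQcomm : ∀ (V : Finset (H →L[ℂ] H)), ↑V ⊆ S →
      ∀ x ∈ V.toList.map (fun v => 1 - v), ∀ y ∈ V.toList.map (fun v => 1 - v),
        Commute x y := by
    intro V hV x hx y hy
    obtain ⟨v, hv, rfl⟩ := hmemQ V hV x hx
    obtain ⟨w, hw, rfl⟩ := hmemQ V hV y hy
    exact hcom2 v hv w hw
  have hQ0 : ∀ (V : Finset (H →L[ℂ] H)), ↑V ⊆ S →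
      0 ≤ (V.toList.map (fun v => 1 - v)).prod := fun V hV =>
    list_prod_nonneg _ (fun x hx => (hQelt V hV x hx).1) (hQcomm V hV)
  have hQ1 : ∀ (V : Finset (H →L[ℂ] H)), ↑V ⊆ S →
      (V.toList.map (fun v => 1 - v)).prod ≤ 1 := fun V hV =>
    list_prod_le_one _ (hQelt V hV) (hQcomm V hV)
  have hxQ : ∀ x ∈ S, ∀ (V : Finset (H →L[ℂ] H)), ↑V ⊆ S →
      Commute x ((V.toList.map (fun v => 1 - v)).prod) := by
    intro x hx V hV
    refine Commute.list_prod_right _ _ fun y hy => ?_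
    obtain ⟨v, hv, rfl⟩ := hmemQ V hV y hy
    exact hcom1 x hx v hv
  have hPQ : ∀ (U V : Finset (H →L[ℂ] H)), ↑U ⊆ S → ↑V ⊆ S →
      Commute (U.toList.prod) ((V.toList.map (fun v => 1 - v)).prod) := by
    intro U V hU hV
    exact Commute.list_prod_left _ _ fun x hx => hxQ x (hmemP U hU x hx) V hV
  have hQQ : ∀ (V W : Finset (H →L[ℂ] H)), ↑V ⊆ S → ↑W ⊆ S →
      Commute ((V.toList.map (fun v => 1 - v)).prod)
        ((W.toList.map (fun v => 1 - v)).prod) := by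
    intro V W hV hW
    refine Commute.list_prod_left _ _ fun x hx => ?_
    obtain ⟨v, hv, rfl⟩ := hmemQ V hV x hx
    refine Commute.list_prod_right _ _ fun y hy => ?_
    obtain ⟨w, hw, rfl⟩ := hmemQ W hW y hy
    exact hcom2 v hv w hw
  have hcsm : ∀ U V : Finset (H →L[ℂ] H),
      opCSM U V = U.toList.prod * (1 - (V.toList.map (fun v => 1 - v)).prod) := by
    intro U V; rw [opCSM, foldr_opSq_eq]
  have hQone : ((({1} : Finset (H →L[ℂ] H)).toList.map (fun v => 1 - v)).prod) = 0 := by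
    simp [Finset.toList_singleton]
  refine ⟨?_, ?_, ?_, ?_, ?_⟩
  · -- (a)
    intro U V₁ V₂ hU hV₁ hV₂ hV12
    have hsd : ↑(V₂ \ V₁) ⊆ S := fun x hx =>
      hV₂ (Finset.mem_coe.2 (Finset.mem_sdiff.1 (Finset.mem_coe.1 hx)).1)
    have hperm : (V₂.toList.map (fun v => 1 - v)).Perm
        ((V₁.toList.map (fun v => 1 - v)) ++ ((V₂ \ V₁).toList.map (fun v => 1 - v))) := by
      have h := (toList_perm_of_subset hV12).map (fun v => 1 - v)
      rwa [List.map_append] at h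
    have hQsplit : (V₂.toList.map (fun v => 1 - v)).prod =
        (V₁.toList.map (fun v => 1 - v)).prod * ((V₂ \ V₁).toList.map (fun v => 1 - v)).prod := by
      rw [hperm.prod_eq' (List.pairwise_of_forall_mem_list (hQcomm V₂ hV₂)), List.prod_append]
    have hdiff : opCSM U V₂ - opCSM U V₁ = U.toList.prod *
        ((V₁.toList.map (fun v => 1 - v)).prod *
          (1 - ((V₂ \ V₁).toList.map (fun v => 1 - v)).prod)) := by
      simp only [hcsm]
      rw [hQsplit]
      noncomm_ring
    rw [← ContinuousLinearMap.nonneg_iff_isPositive, hdiff]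
    exact mul_nonneg_of_commute (hP0 U hU)
      (mul_nonneg_of_commute (hQ0 V₁ hV₁) (sub_nonneg.2 (hQ1 _ hsd))
        ((Commute.one_right _).sub_right (hQQ V₁ _ hV₁ hsd)))
      ((hPQ U V₁ hU hV₁).mul_right ((Commute.one_right _).sub_right (hPQ U _ hU hsd)))
  · -- (b)
    intro U V hU hV
    have hdiff : opCSM U {1} - opCSM U V =
        U.toList.prod * (V.toList.map (fun v => 1 - v)).prod := by
      simp only [hcsm]
      rw [hQone]
      noncomm_ring
    rw [← ContinuousLinearMap.nonneg_iff_isPositive, hdiff]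
    exact mul_nonneg_of_commute (hP0 U hU) (hQ0 V hV) (hPQ U V hU hV)
  · -- (c)
    intro U hU
    simp [opCSM, Finset.toList_empty]
  · -- (d)
    intro c hc
    simp [opCSM, Finset.toList_singleton, Finset.toList_empty, opSq]
  · -- (e)
    intro U V c hU hV hc hcU hcV
    have hUc : ↑(insert c U) ⊆ S := by
      rw [Finset.coe_insert]; exact Set.insert_subset hc hU
    have hVc : ↑(insert c V) ⊆ S := by
      rw [Finset.coe_insert]; exact Set.insert_subset hc hV
    have hPins : (insert c U).toList.prod = c * U.toList.prod := by
      rw [(Finset.toList_insert hcU).prod_eq' (List.pairwise_of_forall_mem_list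
        (fun x hx y hy => hcomm x (hmemP _ hUc x hx) y (hmemP _ hUc y hy))), List.prod_cons]
    have hQins : ((insert c V).toList.map (fun v => 1 - v)).prod =
        (1 - c) * (V.toList.map (fun v => 1 - v)).prod := by
      rw [((Finset.toList_insert hcV).map (fun v => 1 - v)).prod_eq'
        (List.pairwise_of_forall_mem_list (hQcomm _ hVc)), List.map_cons, List.prod_cons]
    have hcP : Commute c U.toList.prod :=
      Commute.list_prod_right _ _ fun x hx => hcomm c hc x (hmemP U hU x hx)
    simp only [hcsm]
    rw [hPins, hQins, hQone, hcP.eq]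
    noncomm_ring
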